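/- Let F = GF(3^n) and f = Inv ∘ (1, γ) with γ ∈ F \ {0, 1}, i.e., f(1) = Inv(γ), f(γ) = 1, f(x) = x^(3^n-2) otherwise. If x ∉ {0, 1, γ, a, 1+a, γ+a, -a, 1-a, γ-a} and a ∉ {0}, then f(x+a) + f(x-a) + f(x) ≠ 0. -/
import Mathlib


theorem stmt_19 {F : Type*} [Field F] [Fintype F] [DecidableEq F] {n : ℕ}
    (hn : 0 < n) (hF : Fintype.card F = 3 ^ n)
    (γ : F) (hγ0 : γ ≠ 0) (hγ1 : γ ≠ 1)
    (f : F → F)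
    (hf : f = fun x => if x = 1 then γ ^ (3 ^ n - 2)
                        else if x = γ then 1 else x ^ (3 ^ n - 2))
    (a : F) (ha : a ≠ 0) (x : F)
    (hx : x ∉ ({0, 1, γ, a, 1 + a, γ + a, -a, 1 - a, γ - a} : Set F)) :
    f (x + a) + f (x - a) + f x ≠ 0 := by
  simp only [Set.mem_insert_iff, Set.mem_singleton_iff, not_or] at hx
  obtain ⟨h0, h1, hg, ha', h1a, hga, hna, h1na, hgna⟩ := hx
  -- characteristic 3
  have hp : (ringChar F).Prime := CharP.char_is_prime F _
  obtain ⟨n', hp', hcard⟩ := FiniteField.card F (ringChar F)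
  have h3 : ringChar F = 3 := by
    have hd : ringChar F ∣ 3 ^ n := by
      rw [← hF, hcard]; exact dvd_pow_self _ n'.2.ne'
    have := hp.dvd_of_dvd_pow hd
    have := Nat.le_of_dvd (by norm_num) this
    interval_cases h : ringChar F <;> simp_all (config := {decide := true}) [Nat.Prime]
  have h3F : (3 : F) = 0 := by
    have := CharP.cast_eq_zero F (ringChar F)
    rwa [h3] at this
  -- inversion
  have key : ∀ y : F, y ≠ 0 → y ^ (3 ^ n - 2) = y⁻¹ := by
    intro y hy
    have hone : y ^ (3 ^ n - 1) = 1 := by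
      rw [← hF]; exact FiniteField.pow_card_sub_one_eq_one y hy
    have h2 : 2 ≤ 3 ^ n := by
      calc 2 ≤ 3 ^ 1 := by norm_num
      _ ≤ 3 ^ n := Nat.pow_le_pow_right (by norm_num) hn
    have hmul : y * y ^ (3 ^ n - 2) = 1 := by
      rw [mul_comm, ← pow_succ, ← hone]; congr 1; omega
    exact eq_inv_of_mul_eq_one_left (by rw [mul_comm] at hmul; exact hmul)
  -- nonzero and ≠ 1, γ for the three arguments
  have hxa0 : x + a ≠ 0 := fun h => hna (by linear_combination h)
  have hxa1 : x + a ≠ 1 := fun h => h1na (by linear_combination h)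
  have hxag : x + a ≠ γ := fun h => hgna (by linear_combination h)
  have hxb0 : x - a ≠ 0 := fun h => ha' (by linear_combination h)
  have hxb1 : x - a ≠ 1 := fun h => h1a (by linear_combination h)
  have hxbg : x - a ≠ γ := fun h => hga (by linear_combination h)
  rw [hf]
  simp only [hxa1, hxag, hxb1, hxbg, h1, hg, if_false]
  rw [key _ hxa0, key _ hxb0, key _ h0]
  intro h
  have h' : (x - a) * x + (x + a) * x + (x + a) * (x - a) = 0 := by
    field_simp at h
    linear_combination h
  have : a ^ 2 = 0 := by linear_combination -h' + x ^ 2 * h3F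
  exact ha (pow_eq_zero_iff (by norm_num) |>.mp this)
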